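/- Let X be a real vector space containing two linearly independent vectors (dim X ≥ 2, possibly infinite) and let γ be a gauge on X. Then γ is a norm (i.e., additionally γ(−x) = γ(x) for all x ∈ X) if and only if every straight line K = {x + t·v : t ∈ ℝ} (with x, v ∈ X, v ≠ 0) is coproximinal in (X, γ). -/

import Mathlib

/-- A gauge on a real vector space: nonnegative, vanishing exactly at `0`,
positively homogeneous, and subadditive. -/
def IsGauge {X : Type*} [AddCommGroup X] [Module ℝ X] (γ : X → ℝ) : Prop :=
  (∀ x, 0 ≤ γ x) ∧ (∀ x, γ x = 0 ↔ x = 0) ∧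
    (∀ (l : ℝ) (x : X), 0 < l → γ (l • x) = l * γ x) ∧
    (∀ x y, γ (x + y) ≤ γ x + γ y)

/-- `K` is coproximinal: every point of the space has a best coapproximation in `K`. -/
def Coproximinal {X : Type*} [AddCommGroup X] (γ : X → ℝ) (K : Set X) : Prop :=
  ∀ y : X, ∃ x ∈ K, ∀ z ∈ K, γ (x - z) ≤ γ (y - z)

section Aux

variable {X : Type*} [AddCommGroup X] [Module ℝ X] {γ : X → ℝ}

lemma IsGauge.zero' (hγ : IsGauge γ) : γ 0 = 0 := (hγ.2.1 0).mpr rfl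

lemma IsGauge.pos (hγ : IsGauge γ) {x : X} (hx : x ≠ 0) : 0 < γ x :=
  lt_of_le_of_ne (hγ.1 x) (fun h => hx ((hγ.2.1 x).mp h.symm))

/-- Key inequality derived from coproximinality of lines. -/
lemma key_ineq (hγ : IsGauge γ)
    (hco : ∀ p v : X, v ≠ 0 → Coproximinal γ {q : X | ∃ t : ℝ, q = p + t • v})
    {z : X} (hz : z ≠ 0) (w : X) :
    2 * (γ z * γ (-z)) ≤ γ z * γ (w - z) + γ (-z) * γ (w + z) := by
  obtain ⟨x₀, ⟨s, rfl⟩, hbest⟩ := hco 0 z hz w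
  have h1 := hbest (0 + (1:ℝ) • z) ⟨1, rfl⟩
  have h2 := hbest (0 + (-1:ℝ) • z) ⟨-1, rfl⟩
  have e1 : (0:X) + s • z - (0 + (1:ℝ) • z) = (s - 1) • z := by
    rw [zero_add, zero_add, one_smul, sub_smul, one_smul]
  have e1' : w - ((0:X) + (1:ℝ) • z) = w - z := by rw [one_smul, zero_add]
  have e2 : (0:X) + s • z - (0 + (-1:ℝ) • z) = (s + 1) • z := by
    rw [zero_add, zero_add, neg_smul, one_smul, sub_neg_eq_add, add_smul, one_smul]
  have e2' : w - ((0:X) + (-1:ℝ) • z) = w + z := by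
    rw [neg_smul, one_smul, zero_add, sub_neg_eq_add]
  rw [e1, e1'] at h1
  rw [e2, e2'] at h2
  set A := γ z with hA
  set B := γ (-z) with hB
  have hA0 : 0 < A := hγ.pos hz
  have hB0 : 0 < B := hγ.pos (neg_ne_zero.mpr hz)
  have hP0 : 0 ≤ γ (w - z) := hγ.1 _
  have hQ0 : 0 ≤ γ (w + z) := hγ.1 _
  rcases le_or_gt 1 s with hs | hs
  · -- s ≥ 1
    have hpos : (0:ℝ) < s + 1 := by linarith
    have hh : γ ((s + 1) • z) = (s + 1) * A := hγ.2.2.1 (s+1) z hpos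
    have h2A : 2 * A ≤ γ (w + z) := by
      rw [hh] at h2; nlinarith
    nlinarith [mul_le_mul_of_nonneg_left h2A hB0.le, mul_nonneg hA0.le hP0]
  rcases le_or_gt s (-1) with hs' | hs'
  · -- s ≤ -1
    have hpos : (0:ℝ) < 1 - s := by linarith
    have he : (s - 1) • z = (1 - s) • (-z) := by
      rw [smul_neg, ← neg_smul]; ring_nf
    have hh : γ ((s - 1) • z) = (1 - s) * B := by rw [he]; exact hγ.2.2.1 (1-s) (-z) hpos
    have h2B : 2 * B ≤ γ (w - z) := by
      rw [hh] at h1; nlinarith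
    nlinarith [mul_le_mul_of_nonneg_left h2B hA0.le, mul_nonneg hB0.le hQ0]
  · -- -1 < s < 1
    have hp1 : (0:ℝ) < 1 - s := by linarith
    have hp2 : (0:ℝ) < s + 1 := by linarith
    have he : (s - 1) • z = (1 - s) • (-z) := by
      rw [smul_neg, ← neg_smul]; ring_nf
    have hh1 : (1 - s) * B ≤ γ (w - z) := by
      rw [← hγ.2.2.1 (1-s) (-z) hp1, ← he]; exact h1
    have hh2 : (s + 1) * A ≤ γ (w + z) := by
      rw [← hγ.2.2.1 (s+1) z hp2]; exact h2
    nlinarith [mul_le_mul_of_nonneg_left hh1 hA0.le, mul_le_mul_of_nonneg_left hh2 hB0.le]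

/-- Forward direction: if γ is symmetric, every line is coproximinal. -/
lemma forward_dir (hγ : IsGauge γ) (hsym : ∀ x : X, γ (-x) = γ x) (p v : X) (hv : v ≠ 0) :
    Coproximinal γ {q : X | ∃ t : ℝ, q = p + t • v} := by
  intro y
  set c := γ v with hc
  have hc0 : 0 < c := hγ.pos hv
  set g : ℝ → ℝ := fun t => γ (y - p - t • v) with hg
  have hg0 : ∀ t, 0 ≤ g t := fun t => hγ.1 _
  have habs : ∀ r : ℝ, γ (r • v) = |r| * c := by
    intro r
    rcases lt_trichotomy r 0 with h | h | h
    · have : r • v = (-r) • (-v) := by rw [smul_neg, ← neg_smul]; ring_nf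
      rw [this, hγ.2.2.1 (-r) (-v) (by linarith), hsym, abs_of_neg h]
    · simp [h, hγ.zero']
    · rw [hγ.2.2.1 r v h, abs_of_pos h]
  -- the chord trick : for t' > t, (t'-t)*c ≤ g t + g t'
  have hchord : ∀ t t' : ℝ, t < t' → (t' - t) * c ≤ g t + g t' := by
    intro t t' htt
    have harg : (t' - t) • v = (y - p - t • v) - (y - p - t' • v) := by
      rw [sub_smul]; abel
    have hsub : γ ((y - p - t • v) - (y - p - t' • v)) ≤ g t + g t' := by
      rw [sub_eq_add_neg]
      calc γ ((y - p - t • v) + -(y - p - t' • v)) ≤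
          γ (y - p - t • v) + γ (-(y - p - t' • v)) := hγ.2.2.2 _ _
        _ = g t + g t' := by rw [hsym]
    calc (t' - t) * c = γ ((t' - t) • v) := (hγ.2.2.1 _ _ (by linarith)).symm
      _ ≤ g t + g t' := harg ▸ hsub
  set S : Set ℝ := Set.range (fun t => t - g t / c) with hS
  have hSne : S.Nonempty := ⟨0 - g 0 / c, 0, rfl⟩
  have hBdd : BddAbove S := by
    refine ⟨max 0 (γ (y - p) / c), ?_⟩
    rintro r ⟨t, rfl⟩
    simp only []
    rcases le_or_gt t 0 with h | h
    · have : t - g t / c ≤ 0 := by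
        have : 0 ≤ g t / c := div_nonneg (hg0 t) hc0.le
        linarith
      exact le_trans this (le_max_left _ _)
    · have h7 := hγ.2.2.2 (y - p) (-(y - p - t • v))
      have h8 : (y - p) + -(y - p - t • v) = t • v := by abel
      rw [h8, hsym] at h7
      have h9 : γ (y - p - t • v) = g t := rfl
      have h10 : γ (t • v) = t * c := hγ.2.2.1 t v h
      have : t * c ≤ γ (y - p) + g t := by rw [← h9, ← h10]; exact h7
      have h2 : t - g t / c ≤ γ (y - p) / c := by
        rw [sub_le_iff_le_add, ← add_div, le_div_iff₀ hc0]
        linarith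
      exact le_trans h2 (le_max_right _ _)
  set s := sSup S with hs_def
  refine ⟨p + s • v, ⟨s, rfl⟩, ?_⟩
  rintro z ⟨t, rfl⟩
  have hx : p + s • v - (p + t • v) = (s - t) • v := by rw [sub_smul]; abel
  have hyz : y - (p + t • v) = y - p - t • v := by abel
  rw [hx, hyz, habs (s - t)]
  show |s - t| * c ≤ g t
  have low : t - g t / c ≤ s := le_csSup hBdd ⟨t, rfl⟩
  have up : s ≤ t + g t / c := by
    apply csSup_le hSne
    rintro r ⟨t', rfl⟩
    simp only []
    rcases le_or_gt t' t with h | h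
    · have h1 : 0 ≤ g t' / c := div_nonneg (hg0 t') hc0.le
      have h2 : 0 ≤ g t / c := div_nonneg (hg0 t) hc0.le
      linarith
    · have := hchord t t' h
      have h5 : t' - t ≤ (g t + g t') / c := by
        rw [le_div_iff₀ hc0]; linarith
      have h6 : (g t + g t') / c = g t / c + g t' / c := by ring
      linarith
  have habs2 : |s - t| ≤ g t / c := abs_le.mpr ⟨by linarith, by linarith⟩
  calc |s - t| * c ≤ (g t / c) * c := mul_le_mul_of_nonneg_right habs2 hc0.le
    _ = g t := div_mul_cancel₀ _ (ne_of_gt hc0)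

end Aux



/-- Per-step inequality for the telescoping argument. -/
lemma step_ineq (M N : ℝ → ℝ) (L : ℝ)
    (hMpos : ∀ t, 0 < M t) (hNpos : ∀ t, 0 < N t)
    (hC : ∀ t ε, 2 * (M t * N t) ≤ M t * N (t - ε) + N t * M (t + ε))
    (τ Δ ν : ℝ) (hν0 : 0 < ν) (hΔ : 0 ≤ Δ) (hL : 0 ≤ L)
    (hNτ : ν ≤ N τ) (hlip : |N τ - N (τ - Δ)| ≤ L * Δ) (hLΔ : L * Δ ≤ ν / 2) :
    Real.log (N τ) - Real.log (N (τ - Δ)) ≤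
      (Real.log (M (τ + Δ)) - Real.log (M τ)) + 2 * (L * Δ / ν) ^ 2 := by
  set e : ℝ := (N τ - N (τ - Δ)) / N τ with he_def
  have hNτ0 : 0 < N τ := hNpos τ
  have he_abs : |e| ≤ L * Δ / ν := by
    rw [he_def, abs_div, abs_of_pos hNτ0]
    exact div_le_div₀ (by positivity) hlip hν0 hNτ
  have hLΔν : L * Δ / ν ≤ 1 / 2 := by
    rw [div_le_div_iff₀ hν0 (by norm_num)]
    linarith
  have he_half : |e| ≤ 1 / 2 := he_abs.trans hLΔν
  have he1 : -(1/2) ≤ e := by cases abs_le.mp he_half; linarith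
  have he2 : e ≤ 1/2 := by cases abs_le.mp he_half; linarith
  have hNeq : N (τ - Δ) = N τ * (1 - e) := by
    rw [he_def]; field_simp; ring
  have h1e : (0:ℝ) < 1 - e := by linarith
  have h1e' : (0:ℝ) < 1 + e := by linarith
  -- step: M (τ+Δ) ≥ M τ * (1+e)
  have hstep : M τ * (1 + e) ≤ M (τ + Δ) := by
    have := hC τ Δ
    rw [hNeq] at this
    have hMτ := hMpos τ
    nlinarith [this, hNτ0, hMτ]
  -- log comparisons
  have hlog1 : Real.log (N τ) - Real.log (N (τ - Δ)) = -Real.log (1 - e) := by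
    rw [hNeq, Real.log_mul (ne_of_gt hNτ0) (ne_of_gt h1e)]; ring
  have hlog2 : Real.log (1 + e) ≤ Real.log (M (τ + Δ)) - Real.log (M τ) := by
    have := Real.log_le_log (mul_pos (hMpos τ) h1e') hstep
    rw [Real.log_mul (ne_of_gt (hMpos τ)) (ne_of_gt h1e')] at this
    linarith
  -- -(log(1-e)+log(1+e)) = -log(1-e^2) ≤ 2 e^2 ≤ 2 (LΔ/ν)^2
  have hsq : e ^ 2 ≤ (L * Δ / ν) ^ 2 := by
    rw [← sq_abs e]
    exact pow_le_pow_left₀ (abs_nonneg e) he_abs 2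
  have hkey : -Real.log ((1 - e) * (1 + e)) ≤ 2 * e ^ 2 := by
    have hprod : (1 - e) * (1 + e) = 1 - e ^ 2 := by ring
    have hy : e ^ 2 ≤ 1/2 := by nlinarith [he_half, abs_nonneg e]
    have hy0 : 0 ≤ e ^ 2 := sq_nonneg e
    have h3 : (1:ℝ) / (1 + 2 * e ^ 2) ≤ 1 - e ^ 2 := by
      rw [div_le_iff₀ (by linarith)]
      nlinarith
    have h4 : Real.log (1 / (1 + 2 * e ^ 2)) ≤ Real.log (1 - e ^ 2) :=
      Real.log_le_log (by positivity) h3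
    rw [Real.log_div one_ne_zero (by linarith), Real.log_one] at h4
    have h5 : Real.log (1 + 2 * e ^ 2) ≤ 2 * e ^ 2 := by
      have := Real.log_le_sub_one_of_pos (show (0:ℝ) < 1 + 2 * e ^ 2 by linarith)
      linarith
    rw [hprod]
    linarith
  rw [Real.log_mul (ne_of_gt h1e) (ne_of_gt h1e')] at hkey
  rw [hlog1]
  nlinarith [hkey, hlog2, hsq]

/-- Main analytic lemma: telescoping the per-step inequality. -/
lemma key_log (M N : ℝ → ℝ) (L : ℝ) (hL : 0 < L)
    (hMpos : ∀ t, 0 < M t) (hNpos : ∀ t, 0 < N t)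
    (hNlip : ∀ s r, N s - N r ≤ L * |s - r|)
    (hC : ∀ t ε, 2 * (M t * N t) ≤ M t * N (t - ε) + N t * M (t + ε)) :
    ∀ t : ℝ, 0 < t →
      Real.log (N t) - Real.log (N 0) ≤ Real.log (M t) - Real.log (M 0) := by
  intro t ht
  -- continuity of N
  have hNcont : Continuous N := by
    have : LipschitzWith (Real.toNNReal L) N := by
      apply LipschitzWith.of_dist_le_mul
      intro a b
      rw [Real.dist_eq, Real.dist_eq, Real.coe_toNNReal _ hL.le, abs_sub_le_iff]
      constructor
      · exact hNlip a b
      · have := hNlip b a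
        rwa [abs_sub_comm] at this
    exact this.continuous
  -- minimum of N on [-1, t]
  obtain ⟨mp, hmp, hmin⟩ := isCompact_Icc.exists_isMinOn
    (Set.nonempty_Icc.mpr (by linarith : (-1:ℝ) ≤ t)) hNcont.continuousOn
  set ν : ℝ := N mp with hν_def
  have hν0 : 0 < ν := hNpos mp
  have hν : ∀ s, s ∈ Set.Icc (-1:ℝ) t → ν ≤ N s := fun s hs => hmin hs
  -- it suffices to prove the bound up to any δ > 0
  apply le_of_forall_pos_le_add
  intro δ hδ
  -- choose n large
  set K : ℝ := 2 * L * t / ν + 2 * L ^ 2 * t ^ 2 / ν ^ 2 with hK_def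
  have hK0 : 0 ≤ K := by positivity
  obtain ⟨n, hn⟩ := exists_nat_gt (max (max t (2 * L * t / ν)) (K / δ))
  have hnt : (n:ℝ) > t := lt_of_le_of_lt (le_max_left _ _ |>.trans (le_max_left _ _)) hn
  have hn0 : (0:ℝ) < n := lt_trans ht hnt
  have hn0' : n ≠ 0 := by rintro rfl; simp at hn0
  have hn1 : (1:ℝ) ≤ n := by exact_mod_cast Nat.one_le_iff_ne_zero.mpr hn0'
  set Δ : ℝ := t / n with hΔ_def
  have hΔ0 : 0 < Δ := div_pos ht hn0
  have hΔ1 : Δ ≤ 1 := by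
    rw [hΔ_def, div_le_one hn0]; linarith
  have hΔt : Δ ≤ t := by
    rw [hΔ_def, div_le_iff₀ hn0]
    nlinarith [ht.le, hn1]
  have hLΔ : L * Δ ≤ ν / 2 := by
    have h2 : (2 * L * t / ν) < n := lt_of_le_of_lt (le_max_right _ _ |>.trans (le_max_left _ _)) hn
    rw [div_lt_iff₀ hν0] at h2
    rw [hΔ_def, ← mul_div_assoc, div_le_iff₀ hn0]
    nlinarith
  have hnΔ : (n:ℝ) * Δ = t := by
    rw [hΔ_def]; field_simp
  -- per-step inequality summed
  have hsum : ∀ i ∈ Finset.range n,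
      (fun i : ℕ => Real.log (N ((i:ℝ) * Δ - Δ))) (i+1) - (fun i : ℕ => Real.log (N ((i:ℝ) * Δ - Δ))) i
      ≤ ((fun i : ℕ => Real.log (M ((i:ℝ) * Δ))) (i+1) - (fun i : ℕ => Real.log (M ((i:ℝ) * Δ))) i)
        + 2 * (L * Δ / ν) ^ 2 := by
    intro i hi
    have hi' : (i:ℝ) < n := by exact_mod_cast Finset.mem_range.mp hi
    have hτmem : (i:ℝ) * Δ ∈ Set.Icc (-1:ℝ) t := by
      constructor
      · have : 0 ≤ (i:ℝ) * Δ := by positivity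
        linarith
      · calc (i:ℝ) * Δ ≤ (n:ℝ) * Δ := by
              apply mul_le_mul_of_nonneg_right (le_of_lt hi') hΔ0.le
            _ = t := hnΔ
    have hlip' : |N ((i:ℝ) * Δ) - N ((i:ℝ) * Δ - Δ)| ≤ L * Δ := by
      rw [abs_sub_le_iff]
      constructor
      · have := hNlip ((i:ℝ) * Δ) ((i:ℝ) * Δ - Δ)
        simpa [abs_of_pos hΔ0] using this
      · have := hNlip ((i:ℝ) * Δ - Δ) ((i:ℝ) * Δ)
        have h2 : |(i:ℝ) * Δ - Δ - (i:ℝ)*Δ| = Δ := by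
          rw [show (i:ℝ) * Δ - Δ - (i:ℝ)*Δ = -Δ by ring, abs_neg, abs_of_pos hΔ0]
        rwa [h2] at this
    have := step_ineq M N L hMpos hNpos hC ((i:ℝ) * Δ) Δ ν hν0 hΔ0.le hL.le
      (hν _ hτmem) hlip' hLΔ
    have harg1 : ((i:ℝ)+1) * Δ - Δ = (i:ℝ) * Δ := by ring
    have harg2 : ((i:ℝ)+1) * Δ = (i:ℝ) * Δ + Δ := by ring
    push_cast
    rw [harg1, harg2]
    linarith
  have hsum2 := Finset.sum_le_sum hsum
  rw [Finset.sum_range_sub (fun i : ℕ => Real.log (N ((i:ℝ) * Δ - Δ)))] at hsum2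
  have hsplit : ∑ i ∈ Finset.range n,
      (((fun i : ℕ => Real.log (M ((i:ℝ) * Δ))) (i+1) - (fun i : ℕ => Real.log (M ((i:ℝ) * Δ))) i)
        + 2 * (L * Δ / ν) ^ 2)
      = (Real.log (M ((n:ℝ) * Δ)) - Real.log (M ((0:ℕ) * Δ))) + n * (2 * (L * Δ / ν) ^ 2) := by
    rw [Finset.sum_add_distrib, Finset.sum_range_sub (fun i : ℕ => Real.log (M ((i:ℝ) * Δ)))]
    simp [mul_comm]
  rw [hsplit] at hsum2
  simp only [Nat.cast_zero, Nat.cast_ofNat, zero_mul, zero_sub] at hsum2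
  rw [hnΔ] at hsum2
  -- hsum2 : log (N (n*Δ - Δ)) - log (N (0*Δ - Δ)) ≤ log M t - log M 0 + n * err
  -- boundary terms
  have hbound : ∀ s s' : ℝ, s ∈ Set.Icc (-1:ℝ) t → s' ∈ Set.Icc (-1:ℝ) t →
      N s - N s' ≤ L * Δ → Real.log (N s) - Real.log (N s') ≤ L * Δ / ν := by
    intro s s' hs hs' hdiff
    have h1 : Real.log (N s) - Real.log (N s') = Real.log (N s / N s') := by
      rw [Real.log_div (ne_of_gt (hNpos s)) (ne_of_gt (hNpos s'))]
    rw [h1]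
    have h2 := Real.log_le_sub_one_of_pos (div_pos (hNpos s) (hNpos s'))
    have h3 : N s / N s' - 1 = (N s - N s') / N s' := div_sub_one (ne_of_gt (hNpos s'))
    have h4 : (N s - N s') / N s' ≤ L * Δ / ν := by
      rcases le_or_gt (N s - N s') 0 with h | h
      · apply le_trans (div_nonpos_of_nonpos_of_nonneg h (hNpos s').le)
        positivity
      · exact div_le_div₀ (by positivity) hdiff hν0 (hν _ hs')
    linarith
  have hmem_t : t ∈ Set.Icc (-1:ℝ) t := Set.mem_Icc.mpr ⟨by linarith, le_refl t⟩
  have hmem_tΔ : t - Δ ∈ Set.Icc (-1:ℝ) t := Set.mem_Icc.mpr ⟨by linarith, by linarith⟩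
  have hmem_0 : (0:ℝ) ∈ Set.Icc (-1:ℝ) t := Set.mem_Icc.mpr ⟨by linarith, ht.le⟩
  have hmem_Δ : -Δ ∈ Set.Icc (-1:ℝ) t := Set.mem_Icc.mpr ⟨by linarith, by linarith⟩
  have hb1 : Real.log (N t) - Real.log (N (t - Δ)) ≤ L * Δ / ν := by
    apply hbound _ _ hmem_t hmem_tΔ
    have := hNlip t (t - Δ)
    simpa [abs_of_pos hΔ0] using this
  have hb2 : Real.log (N (-Δ)) - Real.log (N 0) ≤ L * Δ / ν := by
    apply hbound _ _ hmem_Δ hmem_0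
    have := hNlip (-Δ) 0
    simpa [abs_of_pos hΔ0] using this
  -- combine
  have herr : (n:ℝ) * (2 * (L * Δ / ν) ^ 2) + 2 * (L * Δ / ν) = K / n := by
    rw [hK_def, hΔ_def]
    field_simp
    ring
  have hKn : K / n ≤ δ := by
    have h2 : K / δ < n := lt_of_le_of_lt (le_max_right _ _) hn
    rw [div_le_iff₀ hn0]
    rw [div_lt_iff₀ hδ] at h2
    nlinarith
  -- final chain
  have hfin : Real.log (N t) - Real.log (N 0) ≤
      Real.log (M t) - Real.log (M 0) + ((n:ℝ) * (2 * (L * Δ / ν) ^ 2) + 2 * (L * Δ / ν)) := by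
    linarith [hsum2, hb1, hb2]
  rw [herr] at hfin
  linarith

section Back
variable {X : Type*} [AddCommGroup X] [Module ℝ X] {γ : X → ℝ}

lemma coef_nonpos {α B : ℝ} (h : ∀ t : ℝ, 0 < t → t * α ≤ B) : α ≤ 0 := by
  by_contra hα
  push_neg at hα
  have h1 : (0:ℝ) < max 1 ((B + 1) / α) := lt_of_lt_of_le one_pos (le_max_left _ _)
  have h2 := h _ h1
  have h3 : (B + 1) / α ≤ max 1 ((B + 1) / α) := le_max_right _ _
  rw [div_le_iff₀ hα] at h3
  nlinarith

lemma ratio_eq (hγ : IsGauge γ)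
    (hkey : ∀ z : X, z ≠ 0 → ∀ w : X,
      2 * (γ z * γ (-z)) ≤ γ z * γ (w - z) + γ (-z) * γ (w + z))
    {x u : X} (hxu : LinearIndependent ℝ ![x, u]) :
    γ x * γ (-u) = γ (-x) * γ u := by
  rw [linearIndependent_fin2] at hxu
  simp only [Matrix.cons_val_one, Matrix.head_cons, Matrix.cons_val_zero] at hxu
  obtain ⟨hu, hax⟩ := hxu
  have hne : ∀ t : ℝ, x + t • u ≠ 0 := by
    intro t h
    refine hax (-t) ?_
    rw [neg_smul]
    exact (add_eq_zero_iff_eq_neg.mp h).symm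
  have hA0 : 0 < γ x := by
    have := hne 0; rw [zero_smul, add_zero] at this; exact hγ.pos this
  have hB0 : 0 < γ (-x) := hγ.pos (neg_ne_zero.mpr (by
    have := hne 0; rwa [zero_smul, add_zero] at this))
  have hC0 : 0 < γ u := hγ.pos hu
  have hD0 : 0 < γ (-u) := hγ.pos (neg_ne_zero.mpr hu)
  set L : ℝ := γ u + γ (-u) with hLdef
  have hL0 : 0 < L := by positivity
  have hsmul : ∀ r : ℝ, γ (r • u) ≤ |r| * L := by
    intro r
    rcases lt_trichotomy r 0 with h | h | h
    · have e : r • u = (-r) • (-u) := by rw [smul_neg, ← neg_smul]; ring_nf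
      rw [e, hγ.2.2.1 (-r) (-u) (by linarith), abs_of_neg h]
      nlinarith
    · simp [h, hγ.zero']
    · rw [hγ.2.2.1 r u h, abs_of_pos h]
      nlinarith
  have hMpos : ∀ t : ℝ, 0 < γ (x + t • u) := fun t => hγ.pos (hne t)
  have hnegeq : ∀ t : ℝ, -x - t • u = -(x + t • u) := fun t => by abel
  have hNpos : ∀ t : ℝ, 0 < γ (-x - t • u) := fun t => by
    rw [hnegeq]; exact hγ.pos (neg_ne_zero.mpr (hne t))
  have hMlip : ∀ s r : ℝ, γ (x + s • u) - γ (x + r • u) ≤ L * |s - r| := by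
    intro s r
    have h1 := hγ.2.2.2 (x + r • u) ((s - r) • u)
    have h2 : (x + r • u) + (s - r) • u = x + s • u := by rw [sub_smul]; abel
    rw [h2] at h1
    have h3 := hsmul (s - r)
    nlinarith [abs_nonneg (s - r)]
  have hNlip : ∀ s r : ℝ, γ (-x - s • u) - γ (-x - r • u) ≤ L * |s - r| := by
    intro s r
    have h1 := hγ.2.2.2 (-x - r • u) ((-(s - r)) • u)
    have h2 : (-x - r • u) + (-(s - r)) • u = -x - s • u := by
      rw [neg_smul, sub_smul]; abel
    rw [h2] at h1
    have h3 := hsmul (-(s - r))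
    rw [abs_neg] at h3
    nlinarith [abs_nonneg (s - r)]
  have hCgen : ∀ t ε : ℝ, 2 * (γ (x + t • u) * γ (-x - t • u)) ≤
      γ (x + t • u) * γ (-x - (t - ε) • u) + γ (-x - t • u) * γ (x + (t + ε) • u) := by
    intro t ε
    have h := hkey (x + t • u) (hne t) (ε • u)
    have ea : -(x + t • u) = -x - t • u := by abel
    have eb : ε • u - (x + t • u) = -x - (t - ε) • u := by rw [sub_smul]; abel
    have ec : ε • u + (x + t • u) = x + (t + ε) • u := by rw [add_smul]; abel
    rw [ea, eb, ec] at h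
    exact h
  have hCgen2 : ∀ t ε : ℝ, 2 * (γ (-x - t • u) * γ (x + t • u)) ≤
      γ (-x - t • u) * γ (x + (t - ε) • u) + γ (x + t • u) * γ (-x - (t + ε) • u) := by
    intro t ε
    have h := hCgen t (-ε)
    have e1 : t - -ε = t + ε := by ring
    have e2 : t + -ε = t - ε := by ring
    rw [e1, e2] at h
    linarith
  have hI1 := key_log (fun t : ℝ => γ (x + t • u)) (fun t : ℝ => γ (-x - t • u))
    L hL0 hMpos hNpos hNlip hCgen
  have hI2 := key_log (fun t : ℝ => γ (-x - t • u)) (fun t : ℝ => γ (x + t • u))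
    L hL0 hNpos hMpos hMlip hCgen2
  have e0 : x + (0:ℝ) • u = x := by rw [zero_smul, add_zero]
  have e0' : -x - (0:ℝ) • u = -x := by rw [zero_smul, sub_zero]
  have hprod : ∀ t : ℝ, 0 < t → γ (x + t • u) * γ (-x) = γ (-x - t • u) * γ x := by
    intro t ht
    have h1 : Real.log (γ (-x - t • u)) - Real.log (γ (-x - (0:ℝ) • u)) ≤
        Real.log (γ (x + t • u)) - Real.log (γ (x + (0:ℝ) • u)) := hI1 t ht
    have h2 : Real.log (γ (x + t • u)) - Real.log (γ (x + (0:ℝ) • u)) ≤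
        Real.log (γ (-x - t • u)) - Real.log (γ (-x - (0:ℝ) • u)) := hI2 t ht
    rw [e0, e0'] at h1 h2
    have h3 : Real.log (γ (x + t • u) * γ (-x)) = Real.log (γ (-x - t • u) * γ x) := by
      rw [Real.log_mul (ne_of_gt (hMpos t)) (ne_of_gt hB0),
        Real.log_mul (ne_of_gt (hNpos t)) (ne_of_gt hA0)]
      linarith
    have h4 := congrArg Real.exp h3
    rwa [Real.exp_log (mul_pos (hMpos t) hB0), Real.exp_log (mul_pos (hNpos t) hA0)] at h4
  -- asymptotic bounds
  have ub_M : ∀ t : ℝ, 0 < t → γ (x + t • u) ≤ γ x + t * γ u := by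
    intro t ht
    have := hγ.2.2.2 x (t • u)
    rwa [hγ.2.2.1 t u ht] at this
  have lb_N : ∀ t : ℝ, 0 < t → t * γ (-u) - γ x ≤ γ (-x - t • u) := by
    intro t ht
    have h := hγ.2.2.2 (-x - t • u) x
    have e : (-x - t • u) + x = t • (-u) := by rw [smul_neg]; abel
    rw [e, hγ.2.2.1 t (-u) ht] at h
    linarith
  have lb_M : ∀ t : ℝ, 0 < t → t * γ u - γ (-x) ≤ γ (x + t • u) := by
    intro t ht
    have h := hγ.2.2.2 (x + t • u) (-x)
    have e : (x + t • u) + -x = t • u := by abel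
    rw [e, hγ.2.2.1 t u ht] at h
    linarith
  have ub_N : ∀ t : ℝ, 0 < t → γ (-x - t • u) ≤ γ (-x) + t * γ (-u) := by
    intro t ht
    have h := hγ.2.2.2 (-x) (t • (-u))
    have e : -x + t • (-u) = -x - t • u := by rw [smul_neg]; abel
    rw [e, hγ.2.2.1 t (-u) ht] at h
    exact h
  -- coefficient comparison
  have main1 : ∀ t : ℝ, 0 < t →
      t * (γ (-x) * γ u - γ x * γ (-u)) ≤ γ x * γ (-x) + γ (-x) * γ (-x) := by
    intro t ht
    have k1 : (t * γ u - γ (-x)) * γ (-x) ≤ γ (x + t • u) * γ (-x) :=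
      mul_le_mul_of_nonneg_right (lb_M t ht) hB0.le
    have k2 : γ (-x - t • u) * γ x ≤ (γ (-x) + t * γ (-u)) * γ x :=
      mul_le_mul_of_nonneg_right (ub_N t ht) hA0.le
    have k3 := hprod t ht
    nlinarith
  have main2 : ∀ t : ℝ, 0 < t →
      t * (γ x * γ (-u) - γ (-x) * γ u) ≤ γ x * γ x + γ x * γ (-x) := by
    intro t ht
    have k1 : γ (x + t • u) * γ (-x) ≤ (γ x + t * γ u) * γ (-x) :=
      mul_le_mul_of_nonneg_right (ub_M t ht) hB0.le
    have k2 : (t * γ (-u) - γ x) * γ x ≤ γ (-x - t • u) * γ x :=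
      mul_le_mul_of_nonneg_right (lb_N t ht) hA0.le
    have k3 := hprod t ht
    nlinarith
  have c1 := coef_nonpos main1
  have c2 := coef_nonpos main2
  linarith

lemma exists_indep {x : X} (hx : x ≠ 0)
    (hdim : ∃ u v : X, LinearIndependent ℝ ![u, v]) :
    ∃ u : X, LinearIndependent ℝ ![x, u] := by
  obtain ⟨a, b, hab⟩ := hdim
  rw [linearIndependent_fin2] at hab
  simp only [Matrix.cons_val_one, Matrix.head_cons, Matrix.cons_val_zero] at hab
  obtain ⟨hb, hba⟩ := hab
  have ha : a ≠ 0 := by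
    intro h
    exact hba 0 (by rw [zero_smul, h])
  by_cases hcase : ∀ c : ℝ, c • a ≠ x
  · exact ⟨a, by
      rw [linearIndependent_fin2]
      simp only [Matrix.cons_val_one, Matrix.head_cons, Matrix.cons_val_zero]
      exact ⟨ha, hcase⟩⟩
  · push_neg at hcase
    obtain ⟨c, hc⟩ := hcase
    have hc0 : c ≠ 0 := by
      intro h; rw [h, zero_smul] at hc; exact hx hc.symm
    refine ⟨b, ?_⟩
    rw [linearIndependent_fin2]
    simp only [Matrix.cons_val_one, Matrix.head_cons, Matrix.cons_val_zero]
    refine ⟨hb, fun d hd => ?_⟩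
    refine hba (d / c) ?_
    rw [div_eq_mul_inv, mul_comm, mul_smul, hd, ← hc, ← mul_smul, inv_mul_cancel₀ hc0, one_smul]

end Back


theorem stmt_1 {X : Type*} [AddCommGroup X] [Module ℝ X]
    (hdim : ∃ u v : X, LinearIndependent ℝ ![u, v]) (γ : X → ℝ) (hγ : IsGauge γ) :
    (∀ x : X, γ (-x) = γ x) ↔
      (∀ p v : X, v ≠ 0 → Coproximinal γ {q : X | ∃ t : ℝ, q = p + t • v}) := by
  constructor
  · intro hsym p v hv
    exact forward_dir hγ hsym p v hv
  · intro hco x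
    by_cases hx : x = 0
    · rw [hx, neg_zero]
    · obtain ⟨u, hxu⟩ := exists_indep hx hdim
      have hkey : ∀ z : X, z ≠ 0 → ∀ w : X,
          2 * (γ z * γ (-z)) ≤ γ z * γ (w - z) + γ (-z) * γ (w + z) :=
        fun z hz w => key_ineq hγ hco hz w
      have h1 := ratio_eq hγ hkey hxu
      have hxu' : LinearIndependent ℝ ![-x, u] := by
        rw [linearIndependent_fin2] at hxu ⊢
        simp only [Matrix.cons_val_one, Matrix.head_cons, Matrix.cons_val_zero] at hxu ⊢
        refine ⟨hxu.1, fun a h => hxu.2 (-a) ?_⟩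
        rw [neg_smul, h, neg_neg]
      have h2 := ratio_eq hγ hkey hxu'
      rw [neg_neg] at h2
      -- h1 : γ x * γ (-u) = γ (-x) * γ u
      -- h2 : γ (-x) * γ (-u) = γ x * γ u
      have hu0 : u ≠ 0 := by
        rw [linearIndependent_fin2] at hxu
        simp only [Matrix.cons_val_one, Matrix.head_cons] at hxu
        exact hxu.1
      have hA0 : 0 < γ x := hγ.pos hx
      have hB0 : 0 < γ (-x) := hγ.pos (neg_ne_zero.mpr hx)
      have hC0 : 0 < γ u := hγ.pos hu0
      have hD0 : 0 < γ (-u) := hγ.pos (neg_ne_zero.mpr hu0)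
      have h3 : (γ x * γ x) * γ (-u) = (γ (-x) * γ (-x)) * γ (-u) := by
        linear_combination γ x * h1 - γ (-x) * h2
      have h4 : γ x * γ x = γ (-x) * γ (-x) := mul_right_cancel₀ (ne_of_gt hD0) h3
      have h5 : (γ (-x) - γ x) * (γ (-x) + γ x) = 0 := by linear_combination -h4
      rcases mul_eq_zero.mp h5 with h | h
      · linarith
      · linarith
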